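/- For every c ∈ ℂ with Re(c) > 0, the closure of the numerical range of H_c, i.e. the closure of {Q_c(f) : f ∈ 𝒮(ℝ), ‖f‖ = 1}, equals the set W := {t₁ + c·t₂ ∈ ℂ : t₁, t₂ ≥ 0, t₁·t₂ ≥ 1/4}. -/

import Mathlib

open MeasureTheory Complex Filter Real Set Topology intervalIntegral

theorem integral_deriv_zero {E : Type*} [NormedAddCommGroup E] [NormedSpace ℝ E] [CompleteSpace E]
    {g g' : ℝ → E} (hd : ∀ x, HasDerivAt g (g' x) x) (hi : Integrable g')
    (htop : Tendsto g atTop (𝓝 0)) (hbot : Tendsto g atBot (𝓝 0)) :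
    ∫ x, g' x = 0 := by
  have h1 : ∫ x in Set.Ioi (0:ℝ), g' x = 0 - g 0 :=
    integral_Ioi_of_hasDerivAt_of_tendsto' (fun x _ => hd x) hi.integrableOn htop
  have h2 : ∫ x in Set.Iic (0:ℝ), g' x = g 0 - 0 :=
    integral_Iic_of_hasDerivAt_of_tendsto' (fun x _ => hd x) hi.integrableOn hbot
  rw [← integral_Iic_add_Ioi hi.integrableOn hi.integrableOn, h1, h2]; abel

-- core: x^m * exp(-b x² + c x + u) → 0 atTop
theorem tendsto_quadexp_atTop (m : ℕ) (b c u : ℝ) (hb : 0 < b) :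
    Tendsto (fun x : ℝ => x ^ m * Real.exp (-b * x ^ 2 + c * x + u)) atTop (𝓝 0) := by
  have h1 : Tendsto (fun x : ℝ => x ^ m * Real.exp (-x)) atTop (𝓝 0) :=
    tendsto_pow_mul_exp_neg_atTop_nhds_zero m
  have h2 : Tendsto (fun x : ℝ => -b * x ^ 2 + (c + 1) * x + u) atTop atBot := by
    have : Tendsto (fun x : ℝ => x * (-b * x + (c + 1))) atTop atBot := by
      apply Tendsto.atTop_mul_atBot₀ tendsto_id
      exact tendsto_atBot_add_const_right _ _ (tendsto_id.const_mul_atTop_of_neg (by linarith))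
    refine (tendsto_atBot_add_const_right _ u ?_)
    refine this.congr (fun x => by ring)
  have h3 : Tendsto (fun x : ℝ => Real.exp (-b * x ^ 2 + (c + 1) * x + u)) atTop (𝓝 0) :=
    Real.tendsto_exp_atBot.comp h2
  have := h1.mul h3
  rw [mul_zero] at this
  refine this.congr (fun x => ?_)
  rw [mul_assoc, ← Real.exp_add]
  ring_nf

-- boundedness of continuous function vanishing at ±∞
theorem bdd_of_tendsto {f : ℝ → ℝ} (hf : Continuous f)
    (h1 : Tendsto f atTop (𝓝 0)) (h2 : Tendsto f atBot (𝓝 0)) :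
    ∃ C, ∀ x, f x ≤ C := by
  obtain ⟨A, hA⟩ := (h1.eventually (eventually_lt_nhds zero_lt_one)).exists_forall_of_atTop
  obtain ⟨B, hB⟩ := (h2.eventually (eventually_lt_nhds zero_lt_one)).exists_forall_of_atBot
  obtain ⟨C, hC⟩ := (isCompact_Icc (a := B) (b := A)).exists_bound_of_continuousOn
    hf.continuousOn
  refine ⟨max 1 C, fun x => ?_⟩
  rcases le_or_gt x A with h | h
  · rcases le_or_gt B x with h' | h'
    · exact le_trans (le_trans (le_abs_self _) (hC x ⟨h', h⟩)) (le_max_right _ _)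
    · exact le_trans (hB x h'.le).le (le_max_left _ _)
  · exact le_trans (hA x h.le).le (le_max_left _ _)

-- bound for |x|^k ‖p(x)‖ exp(quad)
theorem poly_gauss_bound (p : Polynomial ℂ) (k : ℕ) (b c u : ℝ) (hb : 0 < b) :
    ∃ C, ∀ x : ℝ, |x| ^ k * ‖Polynomial.eval (x:ℂ) p‖ * Real.exp (-b * x ^ 2 + c * x + u) ≤ C := by
  induction p using Polynomial.induction_on' with
  | add p q hp hq =>
    obtain ⟨C1, h1⟩ := hp; obtain ⟨C2, h2⟩ := hq
    refine ⟨C1 + C2, fun x => ?_⟩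
    have := norm_add_le (Polynomial.eval (x:ℂ) p) (Polynomial.eval (x:ℂ) q)
    calc |x| ^ k * ‖Polynomial.eval (x:ℂ) (p + q)‖ * Real.exp (-b * x ^ 2 + c * x + u)
        ≤ |x| ^ k * (‖Polynomial.eval (x:ℂ) p‖ + ‖Polynomial.eval (x:ℂ) q‖) *
            Real.exp (-b * x ^ 2 + c * x + u) := by
          rw [Polynomial.eval_add]
          gcongr
      _ ≤ C1 + C2 := by
          rw [mul_add, add_mul]
          exact add_le_add (h1 x) (h2 x)
  | monomial i a =>
    -- ‖a * x^i‖ = ‖a‖ * |x|^i ; function is ‖a‖ * |x|^(k+i) * exp quad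
    set g : ℝ → ℝ := fun x => ‖a‖ * (|x| ^ (k + i) * Real.exp (-b * x ^ 2 + c * x + u)) with hg
    have hcont : Continuous g := by fun_prop
    have htop : Tendsto g atTop (𝓝 0) := by
      have h0 := tendsto_quadexp_atTop (k + i) b c u hb
      have : Tendsto (fun x : ℝ => |x| ^ (k+i) * Real.exp (-b * x ^ 2 + c * x + u)) atTop (𝓝 0) := by
        refine h0.congr' ?_
        filter_upwards [eventually_ge_atTop (0:ℝ)] with x hx
        rw [_root_.abs_of_nonneg hx]
      simpa [hg] using (this.const_mul ‖a‖)
    have hbot : Tendsto g atBot (𝓝 0) := by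
      have h0 := tendsto_quadexp_atTop (k + i) b (-c) u hb
      have h0' : Tendsto (fun x : ℝ => |x| ^ (k+i) * Real.exp (-b * x ^ 2 + c * x + u)) atBot (𝓝 0) := by
        have hneg : Tendsto (fun x : ℝ => -x) atBot atTop := tendsto_neg_atBot_atTop
        have := h0.comp hneg
        refine this.congr' ?_
        filter_upwards [eventually_le_atBot (0:ℝ)] with x hx
        simp only [Function.comp]
        rw [abs_of_nonpos hx]
        ring_nf
      simpa [hg] using (h0'.const_mul ‖a‖)
    obtain ⟨C, hC⟩ := bdd_of_tendsto hcont htop hbot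
    refine ⟨C, fun x => le_trans (le_of_eq ?_) (hC x)⟩
    simp only [hg, Polynomial.eval_monomial, norm_mul, norm_pow]
    rw [Complex.norm_real, Real.norm_eq_abs]
    rw [pow_add]
    ring

-- derivative of the gaussian core (complex version)
theorem gauss_hasDerivAt (b w u : ℂ) (z : ℂ) :
    HasDerivAt (fun z : ℂ => Complex.exp (-b * z ^ 2 + w * z + u))
      ((-2 * b * z + w) * Complex.exp (-b * z ^ 2 + w * z + u)) z := by
  have h : HasDerivAt (fun z : ℂ => -b * z ^ 2 + w * z + u) (-2 * b * z + w) z := by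
    have h1 := ((hasDerivAt_pow 2 z).const_mul (-b)).add ((hasDerivAt_id z).const_mul w)
    have h2 := h1.add_const u
    refine h2.congr_deriv ?_
    simp
    ring
  simpa [mul_comm] using h.cexp

theorem gauss_iteratedDeriv (b w u : ℂ) (n : ℕ) :
    ∃ p : Polynomial ℂ, ∀ x : ℝ,
      iteratedDeriv n (fun x : ℝ => Complex.exp (-b * x ^ 2 + w * x + u)) x
        = Polynomial.eval (x:ℂ) p * Complex.exp (-b * (x:ℂ) ^ 2 + w * x + u) := by
  induction n with
  | zero => exact ⟨1, fun x => by simp⟩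
  | succ n ih =>
    obtain ⟨p, hp⟩ := ih
    refine ⟨Polynomial.derivative p + p * (Polynomial.C w - Polynomial.C (2*b) * Polynomial.X),
      fun x => ?_⟩
    rw [iteratedDeriv_succ]
    have heq : iteratedDeriv n (fun x : ℝ => Complex.exp (-b * x ^ 2 + w * x + u))
        = fun x : ℝ => Polynomial.eval (x:ℂ) p * Complex.exp (-b * (x:ℂ) ^ 2 + w * x + u) :=
      funext hp
    rw [heq]
    have hd : HasDerivAt (fun x : ℝ => Polynomial.eval (x:ℂ) p * Complex.exp (-b * (x:ℂ) ^ 2 + w * x + u))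
        ((Polynomial.eval (x:ℂ) (Polynomial.derivative p)
          + Polynomial.eval (x:ℂ) p * (w - 2 * b * x)) * Complex.exp (-b * (x:ℂ) ^ 2 + w * x + u)) x := by
      have hc : HasDerivAt (fun z : ℂ => Polynomial.eval z p * Complex.exp (-b * z ^ 2 + w * z + u))
          (Polynomial.eval (x:ℂ) (Polynomial.derivative p) * Complex.exp (-b * (x:ℂ) ^ 2 + w * x + u)
            + Polynomial.eval (x:ℂ) p * ((-2 * b * x + w) * Complex.exp (-b * (x:ℂ) ^ 2 + w * x + u))) (x:ℂ) :=
        (p.hasDerivAt (x:ℂ)).mul (gauss_hasDerivAt b w u (x:ℂ))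
      have := hc.comp_ofReal
      convert this using 1
      ring
    rw [hd.deriv]
    simp only [Polynomial.eval_add, Polynomial.eval_mul, Polynomial.eval_sub, Polynomial.eval_C,
      Polynomial.eval_X]
    try ring

-- the Schwartz gaussian
noncomputable def gaussSchwartz (b : ℝ) (hb : 0 < b) (w u : ℂ) : SchwartzMap ℝ ℂ where
  toFun x := Complex.exp (-(b:ℂ) * x ^ 2 + w * x + u)
  smooth' := by
    have : (fun x : ℝ => Complex.exp (-(b:ℂ) * x ^ 2 + w * x + u))
        = (fun z : ℂ => Complex.exp (-(b:ℂ) * z ^ 2 + w * z + u)) ∘ (fun x : ℝ => (x:ℂ)) := rfl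
    rw [this]
    refine ContDiff.comp ?_ ofRealCLM.contDiff
    exact Complex.contDiff_exp.comp (((contDiff_const.mul (contDiff_id.pow 2)).add
      (contDiff_const.mul contDiff_id)).add contDiff_const)
  decay' := by
    intro k n
    obtain ⟨p, hp⟩ := gauss_iteratedDeriv (b:ℂ) w u n
    obtain ⟨C, hC⟩ := poly_gauss_bound p k b w.re u.re hb
    refine ⟨C, fun x => ?_⟩
    rw [norm_iteratedFDeriv_eq_norm_iteratedDeriv, hp x]
    have hre : (-(b:ℂ) * (x:ℂ) ^ 2 + w * (x:ℂ) + u).re = -b * x ^ 2 + w.re * x + u.re := by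
      simp [Complex.add_re, Complex.mul_re, ← Complex.ofReal_pow]
      try ring
    calc ‖x‖ ^ k * ‖Polynomial.eval (x:ℂ) p * Complex.exp (-(b:ℂ) * (x:ℂ) ^ 2 + w * x + u)‖
        = |x| ^ k * ‖Polynomial.eval (x:ℂ) p‖ * Real.exp (-b * x ^ 2 + w.re * x + u.re) := by
          rw [norm_mul, Complex.norm_exp, hre,
            Real.norm_eq_abs]
          ring
      _ ≤ C := hC x

theorem gaussSchwartz_apply (b : ℝ) (hb : 0 < b) (w u : ℂ) (x : ℝ) :
    gaussSchwartz b hb w u x = Complex.exp (-(b:ℂ) * x ^ 2 + w * x + u) := rfl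

theorem integrable_sq_mul_exp {l : ℝ} (hl : 0 < l) :
    Integrable fun x : ℝ => x ^ 2 * Real.exp (-l * x ^ 2) := by
  have := integrable_rpow_mul_exp_neg_mul_sq hl (s := 2) (by norm_num)
  refine this.congr (Eventually.of_forall fun x => ?_)
  simp only [Real.rpow_natCast]
  norm_num

theorem moment2 {l : ℝ} (hl : 0 < l) :
    ∫ x : ℝ, x ^ 2 * Real.exp (-l * x ^ 2) = Real.sqrt (π / l) / (2 * l) := by
  set g : ℝ → ℝ := fun x => x * Real.exp (-l * x ^ 2) with hg
  set g' : ℝ → ℝ := fun x => Real.exp (-l * x ^ 2) - 2 * l * (x ^ 2 * Real.exp (-l * x ^ 2)) with hg'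
  have hd : ∀ x, HasDerivAt g (g' x) x := by
    intro x
    have he : HasDerivAt (fun x : ℝ => Real.exp (-l * x ^ 2))
        (Real.exp (-l * x ^ 2) * (-l * (2 * x))) x := by
      have h1 : HasDerivAt (fun x : ℝ => -l * x ^ 2) (-l * (2 * x)) x := by
        simpa using (hasDerivAt_pow 2 x).const_mul (-l)
      exact h1.exp
    have := (hasDerivAt_id x).mul he
    refine this.congr_deriv ?_
    simp [hg']
    ring
  have hi : Integrable g' :=
    (integrable_exp_neg_mul_sq hl).sub ((integrable_sq_mul_exp hl).const_mul _)
  have htop : Tendsto g atTop (𝓝 0) := by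
    have := tendsto_quadexp_atTop 1 l 0 0 hl
    refine this.congr fun x => by simp [hg]
  have hbot : Tendsto g atBot (𝓝 0) := by
    have h := (tendsto_quadexp_atTop 1 l 0 0 hl).comp tendsto_neg_atBot_atTop
    have h2 := h.neg
    rw [neg_zero] at h2
    refine h2.congr fun x => ?_
    simp [hg, Function.comp]
    try ring_nf
  have h0 := integral_deriv_zero hd hi htop hbot
  rw [integral_sub (integrable_exp_neg_mul_sq hl) ((integrable_sq_mul_exp hl).const_mul _),
    sub_eq_zero] at h0
  rw [MeasureTheory.integral_const_mul] at h0
  rw [integral_gaussian] at h0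
  field_simp at h0 ⊢
  linarith

noncomputable def trialF {l : ℝ} (hl : 0 < l) (ω : ℝ) : SchwartzMap ℝ ℂ :=
  gaussSchwartz (l/2) (by linarith) (Complex.I * ω) ((Real.log ((l/π) ^ ((1:ℝ)/4)) : ℝ) : ℂ)

theorem trialF_normSq {l : ℝ} (hl : 0 < l) (ω : ℝ) (x : ℝ) :
    ‖trialF hl ω x‖ ^ 2 = Real.sqrt (l/π) * Real.exp (-l * x ^ 2) := by
  rw [trialF, gaussSchwartz_apply, Complex.norm_exp, ← Real.exp_nat_mul]
  have hre : (-(((l:ℝ)/2 : ℝ):ℂ) * x ^ 2 + Complex.I * ω * x + ((Real.log ((l/π) ^ ((1:ℝ)/4)) : ℝ) : ℂ)).re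
      = -(l/2) * x ^ 2 + Real.log ((l/π) ^ ((1:ℝ)/4)) := by
    simp [Complex.add_re, Complex.mul_re, ← Complex.ofReal_pow]
  rw [hre]
  have hπ : (0:ℝ) < π := Real.pi_pos
  have hq : (0:ℝ) < l/π := by positivity
  have hlog : Real.exp (2 * Real.log ((l/π) ^ ((1:ℝ)/4))) = Real.sqrt (l/π) := by
    rw [two_mul, Real.exp_add, Real.exp_log (by positivity), ← Real.rpow_add hq,
      Real.sqrt_eq_rpow]
    norm_num
  rw [← hlog, ← Real.exp_add]
  ring_nf
theorem trialF_int1 {l : ℝ} (hl : 0 < l) (ω : ℝ) : ∫ x : ℝ, ‖trialF hl ω x‖ ^ 2 = 1 := by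
  have h : ∀ x : ℝ, ‖trialF hl ω x‖ ^ 2 = Real.sqrt (l/π) * Real.exp (-l * x ^ 2) :=
    trialF_normSq hl ω
  have heq : (fun x : ℝ => ‖trialF hl ω x‖ ^ 2) = fun x => Real.sqrt (l/π) * Real.exp (-l * x ^ 2) :=
    funext h
  rw [heq, MeasureTheory.integral_const_mul, integral_gaussian, ← Real.sqrt_mul (by positivity) (π/l)]
  have hπ : (0:ℝ) < π := Real.pi_pos
  rw [show l/π*(π/l) = 1 by field_simp]
  exact Real.sqrt_one

theorem trialF_int2 {l : ℝ} (hl : 0 < l) (ω : ℝ) :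
    ∫ x : ℝ, x ^ 2 * ‖trialF hl ω x‖ ^ 2 = 1 / (2*l) := by
  have heq : (fun x : ℝ => x ^ 2 * ‖trialF hl ω x‖ ^ 2)
      = fun x => Real.sqrt (l/π) * (x ^ 2 * Real.exp (-l * x ^ 2)) := by
    funext x; rw [trialF_normSq hl ω x]; ring
  have hπ : (0:ℝ) < π := Real.pi_pos
  rw [heq, MeasureTheory.integral_const_mul, moment2 hl, ← mul_div_assoc,
    ← Real.sqrt_mul (by positivity) (π/l), show l/π*(π/l) = 1 by field_simp, Real.sqrt_one]

theorem trialF_deriv {l : ℝ} (hl : 0 < l) (ω : ℝ) (x : ℝ) :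
    deriv (⇑(trialF hl ω) : ℝ → ℂ) x = (Complex.I * ω - l * x) * trialF hl ω x := by
  have h := ((gauss_hasDerivAt (((l/2:ℝ)):ℂ) (Complex.I * ω)
      ((Real.log ((l/π) ^ ((1:ℝ)/4)) : ℝ) : ℂ) (x:ℂ)).comp_ofReal)
  have hfun : (⇑(trialF hl ω) : ℝ → ℂ) = fun y : ℝ => Complex.exp (-(((l/2:ℝ)):ℂ) * y ^ 2
      + Complex.I * ω * y + ((Real.log ((l/π) ^ ((1:ℝ)/4)) : ℝ) : ℂ)) :=
    funext fun y => gaussSchwartz_apply _ _ _ _ y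
  rw [hfun, h.deriv]
  push_cast
  ring

theorem integrable_normSq_trialF {l : ℝ} (hl : 0 < l) (ω : ℝ) :
    Integrable fun x : ℝ => ‖trialF hl ω x‖ ^ 2 := by
  have heq : (fun x : ℝ => ‖trialF hl ω x‖ ^ 2) = fun x => Real.sqrt (l/π) * Real.exp (-l * x ^ 2) :=
    funext (trialF_normSq hl ω)
  rw [heq]
  exact (integrable_exp_neg_mul_sq hl).const_mul _

theorem integrable_sq_normSq_trialF {l : ℝ} (hl : 0 < l) (ω : ℝ) :
    Integrable fun x : ℝ => x ^ 2 * ‖trialF hl ω x‖ ^ 2 := by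
  have heq : (fun x : ℝ => x ^ 2 * ‖trialF hl ω x‖ ^ 2)
      = fun x => Real.sqrt (l/π) * (x ^ 2 * Real.exp (-l * x ^ 2)) := by
    funext x; rw [trialF_normSq hl ω x]; ring
  rw [heq]
  exact (integrable_sq_mul_exp hl).const_mul _

theorem trialF_int3 {l : ℝ} (hl : 0 < l) (ω : ℝ) :
    ∫ x : ℝ, ‖deriv (⇑(trialF hl ω) : ℝ → ℂ) x‖ ^ 2 = ω ^ 2 + l / 2 := by
  have hnorm : ∀ x : ℝ, ‖deriv (⇑(trialF hl ω) : ℝ → ℂ) x‖ ^ 2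
      = ω ^ 2 * ‖trialF hl ω x‖ ^ 2 + l ^ 2 * (x ^ 2 * ‖trialF hl ω x‖ ^ 2) := by
    intro x
    rw [trialF_deriv hl ω x, norm_mul, mul_pow]
    have : ‖Complex.I * (ω:ℂ) - (l:ℂ) * (x:ℂ)‖ ^ 2 = ω ^ 2 + l ^ 2 * x ^ 2 := by
      rw [Complex.sq_norm, Complex.normSq_apply]
      simp [Complex.sub_re, Complex.sub_im, Complex.mul_re, Complex.mul_im]
      ring
    rw [this]; ring
  rw [funext hnorm, integral_add ((integrable_normSq_trialF hl ω).const_mul _)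
    ((integrable_sq_normSq_trialF hl ω).const_mul _), MeasureTheory.integral_const_mul, MeasureTheory.integral_const_mul,
    trialF_int1 hl ω, trialF_int2 hl ω]
  field_simp

theorem normsq_eq (z : ℂ) : ‖z‖ ^ 2 = z.re ^ 2 + z.im ^ 2 := by
  rw [Complex.sq_norm, Complex.normSq_apply]; ring

theorem cs_point (z w : ℂ) : |z.re * w.re + z.im * w.im| ≤ ‖z‖ * ‖w‖ := by
  have h1 : (z.re * w.re + z.im * w.im) ^ 2 ≤ (‖z‖ * ‖w‖) ^ 2 := by
    rw [mul_pow, normsq_eq, normsq_eq]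
    nlinarith [sq_nonneg (z.re * w.im - z.im * w.re)]
  calc |z.re * w.re + z.im * w.im| = √((z.re * w.re + z.im * w.im) ^ 2) :=
        (Real.sqrt_sq_eq_abs _).symm
    _ ≤ √((‖z‖ * ‖w‖) ^ 2) := Real.sqrt_le_sqrt h1
    _ = ‖z‖ * ‖w‖ := Real.sqrt_sq (by positivity)

-- global bound for a Schwartz function
theorem schwartz_bound (f : SchwartzMap ℝ ℂ) (k : ℕ) : ∃ C, 0 ≤ C ∧ ∀ x : ℝ, |x| ^ k * ‖f x‖ ≤ C := by
  obtain ⟨C, hC0, hC⟩ := f.decay k 0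
  refine ⟨C, hC0.le, fun x => ?_⟩
  have := hC x
  rwa [norm_iteratedFDeriv_zero, Real.norm_eq_abs] at this

theorem integrable_normSq (f : SchwartzMap ℝ ℂ) : Integrable fun x : ℝ => ‖f x‖ ^ 2 := by
  obtain ⟨C, hC0, hC⟩ := schwartz_bound f 0
  refine (((f.integrable (μ := volume)).norm).const_mul C).mono'
    ((f.continuous.norm.pow 2).aestronglyMeasurable) (Eventually.of_forall fun x => ?_)
  rw [Real.norm_eq_abs, _root_.abs_of_nonneg (by positivity : (0:ℝ) ≤ ‖f x‖ ^ 2)]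
  have := hC x
  simp only [pow_zero, one_mul] at this
  calc ‖f x‖ ^ 2 = ‖f x‖ * ‖f x‖ := by ring
    _ ≤ C * ‖f x‖ := by gcongr

theorem integrable_sq_normSq (f : SchwartzMap ℝ ℂ) :
    Integrable fun x : ℝ => x ^ 2 * ‖f x‖ ^ 2 := by
  obtain ⟨C, hC0, hC⟩ := schwartz_bound f 0
  refine ((f.integrable_pow_mul volume 2).const_mul C).mono'
    (((continuous_id.pow 2).mul (f.continuous.norm.pow 2)).aestronglyMeasurable)
    (Eventually.of_forall fun x => ?_)
  have h0 := hC x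
  simp only [pow_zero, one_mul] at h0
  rw [Real.norm_eq_abs, _root_.abs_of_nonneg (by positivity : (0:ℝ) ≤ x ^ 2 * ‖f x‖ ^ 2)]
  calc x ^ 2 * ‖f x‖ ^ 2 = (‖x‖ ^ 2 * ‖f x‖) * ‖f x‖ := by
        rw [Real.norm_eq_abs, _root_.sq_abs]; ring
    _ ≤ (‖x‖ ^ 2 * ‖f x‖) * C := by
        have : (0:ℝ) ≤ ‖x‖ ^ 2 * ‖f x‖ := by positivity
        exact mul_le_mul_of_nonneg_left h0 this
    _ = C * (‖x‖ ^ 2 * ‖f x‖) := by ring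

theorem integrable_weighted (f g : SchwartzMap ℝ ℂ) :
    Integrable fun x : ℝ => |x| * ‖f x‖ * ‖g x‖ := by
  obtain ⟨C, hC0, hC⟩ := schwartz_bound g 0
  refine ((f.integrable_pow_mul volume 1).const_mul C).mono'
    ((continuous_abs.mul f.continuous.norm |>.mul g.continuous.norm).aestronglyMeasurable)
    (Eventually.of_forall fun x => ?_)
  have h0 := hC x
  simp only [pow_zero, one_mul] at h0
  rw [Real.norm_eq_abs, _root_.abs_of_nonneg (by positivity : (0:ℝ) ≤ |x| * ‖f x‖ * ‖g x‖)]
  calc |x| * ‖f x‖ * ‖g x‖ ≤ |x| * ‖f x‖ * C := by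
        have : (0:ℝ) ≤ |x| * ‖f x‖ := by positivity
        exact mul_le_mul_of_nonneg_left h0 this
    _ = C * (‖x‖ ^ 1 * ‖f x‖) := by rw [pow_one, Real.norm_eq_abs]; ring

theorem schwartz_tendsto_zero (f : SchwartzMap ℝ ℂ) :
    Tendsto (fun x : ℝ => ‖f x‖) atTop (𝓝 0) ∧ Tendsto (fun x : ℝ => ‖f x‖) atBot (𝓝 0) := by
  have h := f.toZeroAtInfty.zero_at_infty'
  rw [cocompact_eq_atBot_atTop, tendsto_sup] at h
  have h1 : Tendsto (fun x : ℝ => f x) atTop (𝓝 0) := by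
    refine h.2.congr fun x => ?_
    simp
  have h2 : Tendsto (fun x : ℝ => f x) atBot (𝓝 0) := by
    refine h.1.congr fun x => ?_
    simp
  constructor
  · simpa using h1.norm
  · simpa using h2.norm

theorem heisenberg (f : SchwartzMap ℝ ℂ) (hf : (∫ x : ℝ, ‖f x‖ ^ 2) = 1) :
    1 / 4 ≤ (∫ x : ℝ, ‖deriv (⇑f : ℝ → ℂ) x‖ ^ 2) * ∫ x : ℝ, x ^ 2 * ‖f x‖ ^ 2 := by
  set f' : SchwartzMap ℝ ℂ := SchwartzMap.derivCLM ℝ ℂ f with hf'def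
  have hco : (⇑f' : ℝ → ℂ) = deriv (⇑f : ℝ → ℂ) :=
    funext fun x => SchwartzMap.derivCLM_apply ℝ f x
  set D : ℝ → ℝ := fun x => 2 * ((f x).re * (f' x).re + (f x).im * (f' x).im) with hD
  have hDle : ∀ x, |D x| ≤ 2 * (‖f x‖ * ‖f' x‖) := by
    intro x
    rw [hD, abs_mul, show |(2:ℝ)| = 2 by norm_num]
    exact mul_le_mul_of_nonneg_left (cs_point (f x) (f' x)) (by norm_num)
  have hDcont : Continuous D := by
    have h1 := f.continuous
    have h2 := f'.continuous
    fun_prop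
  have hNd : ∀ x, HasDerivAt (fun y : ℝ => ‖f y‖ ^ 2) (D x) x := by
    intro x
    have hfd : HasDerivAt (⇑f : ℝ → ℂ) (f' x) x := by
      rw [hco]
      exact (f.differentiable.differentiableAt).hasDerivAt
    have hu : HasDerivAt (fun y : ℝ => (f y).re) ((f' x).re) x :=
      (Complex.reCLM.hasFDerivAt.comp_hasDerivAt x hfd)
    have hv : HasDerivAt (fun y : ℝ => (f y).im) ((f' x).im) x :=
      (Complex.imCLM.hasFDerivAt.comp_hasDerivAt x hfd)
    have h := (hu.pow 2).add (hv.pow 2)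
    have h2 : HasDerivAt (fun y : ℝ => (f y).re ^ 2 + (f y).im ^ 2) (D x) x := by
      refine h.congr_deriv ?_
      rw [hD]
      push_cast
      ring
    refine h2.congr_of_eventuallyEq (Eventually.of_forall fun y => normsq_eq (f y))
  have hxD : Integrable (fun x : ℝ => x * D x) := by
    refine ((integrable_weighted f f').const_mul 2).mono'
      ((continuous_id.mul hDcont).aestronglyMeasurable) (Eventually.of_forall fun x => ?_)
    rw [Real.norm_eq_abs, abs_mul]
    calc |x| * |D x| ≤ |x| * (2 * (‖f x‖ * ‖f' x‖)) :=
          mul_le_mul_of_nonneg_left (hDle x) (abs_nonneg x)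
      _ = 2 * (|x| * ‖f x‖ * ‖f' x‖) := by ring
  have hgd : ∀ x : ℝ, HasDerivAt (fun y : ℝ => y * ‖f y‖ ^ 2) (‖f x‖ ^ 2 + x * D x) x := by
    intro x
    have := (hasDerivAt_id x).mul (hNd x)
    refine this.congr_deriv ?_
    simp
  obtain ⟨C1, hC10, hC1⟩ := schwartz_bound f 1
  have hsqueeze : ∀ x : ℝ, ‖x * ‖f x‖ ^ 2‖ ≤ C1 * ‖f x‖ := by
    intro x
    rw [Real.norm_eq_abs, abs_mul, _root_.abs_of_nonneg (by positivity : (0:ℝ) ≤ ‖f x‖ ^ 2)]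
    calc |x| * ‖f x‖ ^ 2 = (|x| ^ 1 * ‖f x‖) * ‖f x‖ := by ring
      _ ≤ C1 * ‖f x‖ := mul_le_mul_of_nonneg_right (hC1 x) (norm_nonneg _)
  have htz := schwartz_tendsto_zero f
  have htop : Tendsto (fun x : ℝ => x * ‖f x‖ ^ 2) atTop (𝓝 0) := by
    refine squeeze_zero_norm hsqueeze ?_
    simpa using htz.1.const_mul C1
  have hbot : Tendsto (fun x : ℝ => x * ‖f x‖ ^ 2) atBot (𝓝 0) := by
    refine squeeze_zero_norm hsqueeze ?_
    simpa using htz.2.const_mul C1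
  have hzero := integral_deriv_zero hgd ((integrable_normSq f).add hxD) htop hbot
  rw [integral_add (integrable_normSq f) hxD, hf] at hzero
  set B := ∫ x : ℝ, |x| * ‖f x‖ * ‖f' x‖ with hBdef
  have hB2 : 1 ≤ 2 * B := by
    have h1 : (1:ℝ) = ∫ x : ℝ, -(x * D x) := by rw [MeasureTheory.integral_neg]; linarith
    rw [h1]
    calc ∫ x : ℝ, -(x * D x) ≤ ∫ x : ℝ, 2 * (|x| * ‖f x‖ * ‖f' x‖) := by
          refine integral_mono hxD.neg ((integrable_weighted f f').const_mul 2) fun x => ?_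
          calc -(x * D x) ≤ |x * D x| := neg_le_abs _
            _ = |x| * |D x| := abs_mul x (D x)
            _ ≤ |x| * (2 * (‖f x‖ * ‖f' x‖)) :=
                mul_le_mul_of_nonneg_left (hDle x) (abs_nonneg x)
            _ = 2 * (|x| * ‖f x‖ * ‖f' x‖) := by ring
      _ = 2 * B := MeasureTheory.integral_const_mul 2 _
  set A := ∫ x : ℝ, x ^ 2 * ‖f x‖ ^ 2 with hAdef
  set Cc := ∫ x : ℝ, ‖f' x‖ ^ 2 with hCcdef
  have hA0 : 0 ≤ A := integral_nonneg fun x => by positivity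
  have hB0 : 0 ≤ B := integral_nonneg fun x => by positivity
  have hquad : ∀ t : ℝ, 0 ≤ t ^ 2 * A - 2 * t * B + Cc := by
    intro t
    have h0 : 0 ≤ ∫ x : ℝ, (t * (|x| * ‖f x‖) - ‖f' x‖) ^ 2 :=
      integral_nonneg fun x => sq_nonneg _
    have hpt : (fun x : ℝ => (t * (|x| * ‖f x‖) - ‖f' x‖) ^ 2)
        = fun x : ℝ => (t ^ 2 * (x ^ 2 * ‖f x‖ ^ 2) - 2 * t * (|x| * ‖f x‖ * ‖f' x‖))
          + ‖f' x‖ ^ 2 := by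
      funext x
      have h : |x| ^ 2 = x ^ 2 := _root_.sq_abs x
      rw [← h]; ring
    have hi2 : Integrable (fun x : ℝ => t ^ 2 * (x ^ 2 * ‖f x‖ ^ 2)) :=
      (integrable_sq_normSq f).const_mul _
    have hi3 : Integrable (fun x : ℝ => 2 * t * (|x| * ‖f x‖ * ‖f' x‖)) :=
      (integrable_weighted f f').const_mul _
    have hi1 : Integrable (fun x : ℝ => t ^ 2 * (x ^ 2 * ‖f x‖ ^ 2)
        - 2 * t * (|x| * ‖f x‖ * ‖f' x‖)) := hi2.sub hi3
    rw [hpt, integral_add hi1 (integrable_normSq f'), integral_sub hi2 hi3,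
      MeasureTheory.integral_const_mul, MeasureTheory.integral_const_mul] at h0
    linarith
  have hApos : 0 < A := by
    rcases hA0.lt_or_eq with h | h
    · exact h
    · exfalso
      have hBpos : 0 < B := by linarith
      set t := (Cc + 1) / (2 * B) with ht
      have h2 : 2 * t * B = Cc + 1 := by rw [ht]; field_simp
      have ht2A : t ^ 2 * A ≤ 0 := by rw [← h]; simp
      linarith [hquad t]
  have hBsq : B ^ 2 ≤ Cc * A := by
    have h := hquad (B / A)
    have h1 : (B / A) ^ 2 * A = B ^ 2 / A := by field_simp
    have h2 : 2 * (B / A) * B = 2 * (B ^ 2 / A) := by field_simp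
    rw [h1, h2] at h
    have h3 : B ^ 2 / A ≤ Cc := by linarith
    calc B ^ 2 = B ^ 2 / A * A := by field_simp
      _ ≤ Cc * A := mul_le_mul_of_nonneg_right h3 hA0
  have hfinal : 1 / 4 ≤ Cc * A := by nlinarith
  rw [← hco]
  exact hfinal

theorem W_isClosed (c : ℂ) (hc : 0 < c.re) :
    IsClosed {z : ℂ | ∃ t₁ t₂ : ℝ, 0 ≤ t₁ ∧ 0 ≤ t₂ ∧ 1 / 4 ≤ t₁ * t₂ ∧
        z = (t₁ : ℂ) + c * (t₂ : ℂ)} := by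
  refine IsSeqClosed.isClosed ?_
  intro z x hz hx
  choose t₁ t₂ h1 h2 h3 h4 using hz
  -- bounds
  have hre : ∀ n, (z n).re = t₁ n + c.re * t₂ n := by
    intro n
    rw [h4 n]
    simp [Complex.add_re, Complex.mul_re]
  have hbdd : BddAbove (Set.range fun n => (z n).re) :=
    (((Complex.continuous_re.tendsto x).comp hx).bddAbove_range)
  obtain ⟨M, hM⟩ := hbdd
  have hM' : ∀ n, (z n).re ≤ M := fun n => hM (Set.mem_range_self n)
  have ht₁le : ∀ n, t₁ n ∈ Set.Icc (0:ℝ) M := by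
    intro n
    refine ⟨h1 n, ?_⟩
    have := hre n
    nlinarith [h2 n, hM' n, mul_nonneg hc.le (h2 n)]
  have ht₂le : ∀ n, t₂ n ∈ Set.Icc (0:ℝ) (M / c.re) := by
    intro n
    refine ⟨h2 n, ?_⟩
    have := hre n
    rw [le_div_iff₀ hc]
    nlinarith [h1 n, hM' n]
  obtain ⟨a, -, φ, hφmono, hφ⟩ := tendsto_subseq_of_bounded (Metric.isBounded_Icc _ _) ht₁le
  obtain ⟨b, -, ψ, hψmono, hψ⟩ := tendsto_subseq_of_bounded (Metric.isBounded_Icc _ _)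
    (fun n => ht₂le (φ n))
  have hta : Tendsto (fun k => t₁ (φ (ψ k))) atTop (𝓝 a) := hφ.comp hψmono.tendsto_atTop
  have htb : Tendsto (fun k => t₂ (φ (ψ k))) atTop (𝓝 b) := hψ
  have ha0 : 0 ≤ a := le_of_tendsto_of_tendsto' tendsto_const_nhds hta fun k => h1 _
  have hb0 : 0 ≤ b := le_of_tendsto_of_tendsto' tendsto_const_nhds htb fun k => h2 _
  have hab : 1 / 4 ≤ a * b :=
    le_of_tendsto_of_tendsto' tendsto_const_nhds (hta.mul htb) fun k => h3 _
  have hzx : Tendsto (fun k => z (φ (ψ k))) atTop (𝓝 x) :=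
    hx.comp ((hφmono.comp hψmono).tendsto_atTop)
  have hzz : Tendsto (fun k => z (φ (ψ k))) atTop (𝓝 ((a : ℂ) + c * (b : ℂ))) := by
    have h₁ : Tendsto (fun k => ((t₁ (φ (ψ k)) : ℂ))) atTop (𝓝 (a : ℂ)) :=
      (Complex.continuous_ofReal.tendsto a).comp hta
    have h₂ : Tendsto (fun k => ((t₂ (φ (ψ k)) : ℂ))) atTop (𝓝 (b : ℂ)) :=
      (Complex.continuous_ofReal.tendsto b).comp htb
    have := h₁.add ((tendsto_const_nhds (x := c)).mul h₂)
    refine this.congr fun k => ?_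
    rw [h4 (φ (ψ k))]
  exact ⟨a, b, ha0, hb0, hab, tendsto_nhds_unique hzx hzz⟩


/-- The quadratic form of the complex harmonic oscillator,
`Q_c(f) = ∫ |f'|² + c ∫ x² |f|²`, evaluated on a Schwartz function. -/
noncomputable def harmonicOscillatorForm (c : ℂ) (f : SchwartzMap ℝ ℂ) : ℂ :=
  ((∫ x : ℝ, ‖deriv (f : ℝ → ℂ) x‖ ^ 2 : ℝ) : ℂ) +
    c * ((∫ x : ℝ, x ^ 2 * ‖f x‖ ^ 2 : ℝ) : ℂ)

/-- The closure of the numerical range of the complex harmonic oscillator `H_c`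
equals `W = {t₁ + c t₂ : t₁, t₂ ≥ 0, t₁ t₂ ≥ 1/4}`. -/
theorem closure_numericalRange_harmonicOscillator (c : ℂ) (hc : 0 < c.re) :
    closure {z : ℂ | ∃ f : SchwartzMap ℝ ℂ,
        (∫ x : ℝ, ‖f x‖ ^ 2 : ℝ) = 1 ∧ z = harmonicOscillatorForm c f} =
    {z : ℂ | ∃ t₁ t₂ : ℝ, 0 ≤ t₁ ∧ 0 ≤ t₂ ∧ 1 / 4 ≤ t₁ * t₂ ∧
        z = (t₁ : ℂ) + c * (t₂ : ℂ)} := by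
  have hrange : {z : ℂ | ∃ f : SchwartzMap ℝ ℂ,
        (∫ x : ℝ, ‖f x‖ ^ 2 : ℝ) = 1 ∧ z = harmonicOscillatorForm c f} =
      {z : ℂ | ∃ t₁ t₂ : ℝ, 0 ≤ t₁ ∧ 0 ≤ t₂ ∧ 1 / 4 ≤ t₁ * t₂ ∧
        z = (t₁ : ℂ) + c * (t₂ : ℂ)} := by
    ext z
    constructor
    · rintro ⟨f, hf1, rfl⟩
      exact ⟨∫ x : ℝ, ‖deriv (⇑f : ℝ → ℂ) x‖ ^ 2, ∫ x : ℝ, x ^ 2 * ‖f x‖ ^ 2,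
        integral_nonneg fun x => by positivity, integral_nonneg fun x => by positivity,
        heisenberg f hf1, rfl⟩
    · rintro ⟨t₁, t₂, h1, h2, h3, rfl⟩
      have ht₂ : 0 < t₂ := by nlinarith
      have hl : 0 < 1 / (2 * t₂) := by positivity
      set l : ℝ := 1 / (2 * t₂) with hldef
      have hl2 : l / 2 * (4 * t₂) = 1 := by rw [hldef]; field_simp; ring
      have hω2 : 0 ≤ t₁ - l / 2 := by nlinarith
      set ω : ℝ := Real.sqrt (t₁ - l / 2) with hωdef
      have hω : ω ^ 2 = t₁ - l / 2 := Real.sq_sqrt hω2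
      refine ⟨trialF hl ω, trialF_int1 hl ω, ?_⟩
      rw [harmonicOscillatorForm, trialF_int3 hl ω, trialF_int2 hl ω]
      have e1 : ω ^ 2 + l / 2 = t₁ := by rw [hω]; ring
      have e2 : 1 / (2 * l) = t₂ := by rw [hldef]; field_simp
      rw [e1, e2]
  rw [hrange]
  exact (W_isClosed c hc).closure_eq
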